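/- The Choi–Lam polynomial CL₁(x₁,x₂,x₃,x₄) = −4x₁x₂x₃x₄ + x₁²x₂² + x₁²x₃² + x₂²x₃² + x₄⁴ is nonnegative on all of ℝ⁴. -/
import Mathlib

theorem choi_lam_one_nonneg (x₁ x₂ x₃ x₄ : ℝ) :
    0 ≤ -4*x₁*x₂*x₃*x₄ + x₁^2*x₂^2 + x₁^2*x₃^2 + x₂^2*x₃^2 + x₄^4 := by
  rcases le_or_gt 0 (x₁*x₂) with h | h
  · nlinarith [sq_nonneg (x₁*x₃ - x₂*x₃), sq_nonneg (x₁*x₂ - x₄^2), sq_nonneg (x₄ - x₃), mul_nonneg h (sq_nonneg (x₄ - x₃))]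
  · nlinarith [sq_nonneg (x₁*x₃ + x₂*x₃), sq_nonneg (x₁*x₂ + x₄^2), sq_nonneg (x₃ + x₄), mul_nonneg (neg_nonneg.2 h.le) (sq_nonneg (x₃ + x₄))]
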